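/- (Lemma A.2) Given an accumulating collision datum, for every index i with 1 ≤ i ≤ a+1 the left limit lim_{t → t₀⁻} v_i(t) exists. -/

import Mathlib

open Matrix Filter Set

/-- The collision matrix `R_i` acting on coordinates `i` and `i+1` (0-based),
with 2×2 block `((γ, 1−γ), (1+γ, −γ))`, and agreeing with the identity elsewhere. -/
def collMat (n : ℕ) (i : ℕ) (γ : ℝ) : Matrix (Fin n) (Fin n) ℝ :=
  Matrix.of fun j k =>
    if j.val = i ∧ k.val = i then γ
    else if j.val = i ∧ k.val = i + 1 then 1 - γ
    else if j.val = i + 1 ∧ k.val = i then 1 + γ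
    else if j.val = i + 1 ∧ k.val = i + 1 then -γ
    else if j = k then 1 else 0

/-- An accumulating collision datum for the falling-ball system with `n ≥ 2` particles of
positive masses `m`: a time `t₀ > 0`, a strictly increasing sequence of collision times
`0 < t_1 < t_2 < ⋯ < t₀` with `t_k → t₀`, an index `a ≤ n − 1` with collision types
`ty k ∈ {0, 1, …, a}` such that every value in `{0, …, a}` occurs infinitely often
(here `ty k = 0` is a floor collision and `ty k = i + 1` is a collision of the 0-based
particles `i` and `i + 1`), a bound `C > 0`, and functions `q, v : [0, t₀) → ℝⁿ`
satisfying conditions (a)–(e) of the paper.  The field `vminus k` records the left limit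
`v(t_k⁻)`. -/
structure AccumDatum (n : ℕ) (m : Fin n → ℝ) : Type where
  hn : 2 ≤ n
  hm : ∀ j, 0 < m j
  t0 : ℝ
  t0_pos : 0 < t0
  /-- collision times (0-indexed: `tc 0` is the paper's `t_1`) -/
  tc : ℕ → ℝ
  tc_pos : 0 < tc 0
  tc_mono : StrictMono tc
  tc_lt : ∀ k, tc k < t0
  tc_lim : Tendsto tc atTop (nhds t0)
  a : ℕ
  ha : a ≤ n - 1
  /-- collision types -/
  ty : ℕ → ℕ
  ty_le : ∀ k, ty k ≤ a
  /-- every value in `{0, …, a}` is attained by `ty` infinitely often -/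
  ty_inf : ∀ i, i ≤ a → ∀ K : ℕ, ∃ k, K ≤ k ∧ ty k = i
  C : ℝ
  C_pos : 0 < C
  q : ℝ → Fin n → ℝ
  v : ℝ → Fin n → ℝ
  /-- the left limit `v(t_k⁻)` -/
  vminus : ℕ → Fin n → ℝ
  /-- (a) `q` is continuous on `[0, t₀)` -/
  q_cont : ∀ j, ContinuousOn (fun t => q t j) (Ico 0 t0)
  /-- (a) `0 ≤ q_1(t) ≤ q_2(t) ≤ ⋯ ≤ q_n(t)` -/
  q_nonneg : ∀ t, 0 ≤ t → t < t0 → 0 ≤ q t ⟨0, by omega⟩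
  q_mono : ∀ t, 0 ≤ t → t < t0 → ∀ j j' : Fin n, j ≤ j' → q t j ≤ q t j'
  /-- (a) `|v_j(t)| ≤ C` -/
  v_bdd : ∀ t, 0 ≤ t → t < t0 → ∀ j, |v t j| ≤ C
  /-- (b) between collisions, `q' = v` -/
  q_deriv : ∀ t, 0 ≤ t → t < t0 → t ∉ range tc → ∀ j,
    HasDerivWithinAt (fun s => q s j) (v t j) (Ico 0 t0) t
  /-- (b) between collisions, `v' = -1` componentwise -/
  v_deriv : ∀ t, 0 ≤ t → t < t0 → t ∉ range tc → ∀ j,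
    HasDerivWithinAt (fun s => v s j) (-1) (Ico 0 t0) t
  /-- (c) `v` is right-continuous -/
  v_rc : ∀ t, 0 ≤ t → t < t0 → ∀ j,
    Tendsto (fun s => v s j) (nhdsWithin t (Ici t)) (nhds (v t j))
  /-- (c) `v` has left limit `vminus k` at `tc k` -/
  v_ll : ∀ k j, Tendsto (fun s => v s j) (nhdsWithin (tc k) (Iio (tc k))) (nhds (vminus k j))
  /-- (d) collision of particles `i`, `i+1` (0-based): `q_i = q_{i+1}`,
  `v_i(t_k⁻) > v_{i+1}(t_k⁻)` and `v⁺ = R_i v⁻` -/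
  coll_pair : ∀ k, ∀ i : ℕ, ∀ hi : i + 1 < n, ty k = i + 1 →
    q (tc k) ⟨i, Nat.lt_of_succ_lt hi⟩ = q (tc k) ⟨i + 1, hi⟩ ∧
    vminus k ⟨i, Nat.lt_of_succ_lt hi⟩ > vminus k ⟨i + 1, hi⟩ ∧
    v (tc k) = (collMat n i ((m ⟨i, Nat.lt_of_succ_lt hi⟩ - m ⟨i + 1, hi⟩) /
        (m ⟨i, Nat.lt_of_succ_lt hi⟩ + m ⟨i + 1, hi⟩))) *ᵥ vminus k
  /-- (e) floor collision: `q_1 = 0`, `v_1(t_k⁻) < 0`, `v_1⁺ = -v_1⁻`, and the other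
  velocities are unchanged -/
  coll_floor : ∀ k, ty k = 0 →
    q (tc k) ⟨0, by omega⟩ = 0 ∧
    vminus k ⟨0, by omega⟩ < 0 ∧
    v (tc k) ⟨0, by omega⟩ = -vminus k ⟨0, by omega⟩ ∧
    ∀ j : Fin n, j ≠ ⟨0, by omega⟩ → v (tc k) j = vminus k j
section AuxAccum

lemma collMat_apply' {n : ℕ} (i : ℕ) (γ : ℝ) (p c : Fin n) :
    collMat n i γ p c =
      if (p : ℕ) = i ∧ (c : ℕ) = i then γ
      else if (p : ℕ) = i ∧ (c : ℕ) = i + 1 then 1 - γ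
      else if (p : ℕ) = i + 1 ∧ (c : ℕ) = i then 1 + γ
      else if (p : ℕ) = i + 1 ∧ (c : ℕ) = i + 1 then -γ
      else if p = c then 1 else 0 := rfl

lemma collMat_mulVec_eval {n i : ℕ} (γ : ℝ) (hi : i + 1 < n) (x : Fin n → ℝ) (p : Fin n) :
    (collMat n i γ *ᵥ x) p =
      if (p : ℕ) = i then γ * x ⟨i, Nat.lt_of_succ_lt hi⟩ + (1 - γ) * x ⟨i + 1, hi⟩
      else if (p : ℕ) = i + 1 then (1 + γ) * x ⟨i, Nat.lt_of_succ_lt hi⟩ - γ * x ⟨i + 1, hi⟩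
      else x p := by
  set e0 : Fin n := ⟨i, Nat.lt_of_succ_lt hi⟩ with he0
  set e1 : Fin n := ⟨i + 1, hi⟩ with he1
  have hv0 : (e0 : ℕ) = i := rfl
  have hv1 : (e1 : ℕ) = i + 1 := rfl
  have hne : e0 ≠ e1 := by
    intro h
    have := congrArg (fun z : Fin n => (z : ℕ)) h
    simp only [hv0, hv1] at this
    omega
  have hsum : (collMat n i γ *ᵥ x) p = ∑ c : Fin n, collMat n i γ p c * x c := rfl
  split_ifs with h0 h1
  · rw [hsum, Fintype.sum_eq_add (f := fun c => collMat n i γ p c * x c) e0 e1 hne]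
    · have E0 : collMat n i γ p e0 = γ := by
        rw [collMat_apply']; simp [h0, hv0, hv1]
      have E1 : collMat n i γ p e1 = 1 - γ := by
        rw [collMat_apply']; simp [h0, hv0, hv1]
      rw [E0, E1]
    · intro c hc
      obtain ⟨hc0, hc1⟩ := hc
      have hc0' : (c : ℕ) ≠ i := fun h => hc0 (Fin.ext (h.trans hv0.symm))
      have hc1' : (c : ℕ) ≠ i + 1 := fun h => hc1 (Fin.ext (h.trans hv1.symm))
      have hpc : p ≠ c := fun h => hc0' (h ▸ h0)
      have hz : collMat n i γ p c = 0 := by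
        rw [collMat_apply']; simp [hc0', hc1', hpc]
      rw [hz, zero_mul]
  · rw [hsum, Fintype.sum_eq_add (f := fun c => collMat n i γ p c * x c) e0 e1 hne]
    · have E0 : collMat n i γ p e0 = 1 + γ := by
        rw [collMat_apply']; simp [h0, h1, hv0, hv1]
      have E1 : collMat n i γ p e1 = -γ := by
        rw [collMat_apply']; simp [h0, h1, hv0, hv1]
      rw [E0, E1]; ring
    · intro c hc
      obtain ⟨hc0, hc1⟩ := hc
      have hc0' : (c : ℕ) ≠ i := fun h => hc0 (Fin.ext (h.trans hv0.symm))
      have hc1' : (c : ℕ) ≠ i + 1 := fun h => hc1 (Fin.ext (h.trans hv1.symm))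
      have hpc : p ≠ c := fun h => hc1' (h ▸ h1)
      have hz : collMat n i γ p c = 0 := by
        rw [collMat_apply']; simp [hc0', hc1', hpc]
      rw [hz, zero_mul]
  · rw [hsum, Fintype.sum_eq_single p]
    · have hz : collMat n i γ p p = 1 := by
        rw [collMat_apply']; simp [h0, h1]
      rw [hz, one_mul]
    · intro c hc
      have hz : collMat n i γ p c = 0 := by
        rw [collMat_apply']; simp [h0, h1, hc.symm]
      rw [hz, zero_mul]

variable {n : ℕ} {m : Fin n → ℝ}

/-- The shifted partial momentum `∑_{j ≤ i ≤ a} m_i (v_i(t) + t)`. -/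
noncomputable def gfAccum (D : AccumDatum n m) (j : ℕ) (t : ℝ) : ℝ :=
  ∑ i : Fin n, if j ≤ (i : ℕ) ∧ (i : ℕ) ≤ D.a then m i * (D.v t i + t) else 0

/-- Its left limit at the collision time `tc k`. -/
noncomputable def glAccum (D : AccumDatum n m) (j k : ℕ) : ℝ :=
  ∑ i : Fin n, if j ≤ (i : ℕ) ∧ (i : ℕ) ≤ D.a then m i * (D.vminus k i + D.tc k) else 0

lemma tcAccum_pos (D : AccumDatum n m) (k : ℕ) : 0 < D.tc k :=
  lt_of_lt_of_le D.tc_pos (D.tc_mono.monotone (Nat.zero_le k))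

/-- The jump of the shifted partial momentum at a collision is nonnegative. -/
lemma glAccum_le (D : AccumDatum n m) (j k : ℕ) : glAccum D j k ≤ gfAccum D j (D.tc k) := by
  rw [← sub_nonneg]
  have hdiff : gfAccum D j (D.tc k) - glAccum D j k
      = ∑ i : Fin n, if j ≤ (i : ℕ) ∧ (i : ℕ) ≤ D.a then
          m i * (D.v (D.tc k) i - D.vminus k i) else 0 := by
    rw [gfAccum, glAccum, ← Finset.sum_sub_distrib]
    refine Finset.sum_congr rfl fun i _ => ?_
    split_ifs with h
    · ring
    · simp
  rw [hdiff]
  have hn2 := D.hn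
  cases hty : D.ty k with
  | zero =>
    obtain ⟨-, hneg, h0, hrest⟩ := D.coll_floor k hty
    set e0 : Fin n := ⟨0, by omega⟩ with he0
    have h0' : D.v (D.tc k) e0 = -D.vminus k e0 := h0
    rw [Fintype.sum_eq_single e0]
    · split_ifs with h
      · rw [h0']
        have hm0 := (D.hm e0).le
        nlinarith [hneg]
      · exact le_rfl
    · intro b hb
      have hb' : D.v (D.tc k) b = D.vminus k b := hrest b hb
      split_ifs <;> simp [hb']
  | succ i0 =>
    have hle : i0 + 1 ≤ D.a := hty ▸ D.ty_le k
    have ha := D.ha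
    have hi1 : i0 + 1 < n := by omega
    obtain ⟨-, hgt, hv⟩ := D.coll_pair k i0 hi1 hty
    set e0 : Fin n := ⟨i0, Nat.lt_of_succ_lt hi1⟩ with he0
    set e1 : Fin n := ⟨i0 + 1, hi1⟩ with he1
    set γ : ℝ := (m e0 - m e1) / (m e0 + m e1) with hγ
    have hne : e0 ≠ e1 := by
      intro h
      have := congrArg (fun z : Fin n => (z : ℕ)) h
      simp only [he0, he1] at this
      omega
    have hv' : D.v (D.tc k) = collMat n i0 γ *ᵥ D.vminus k := hv
    have hv0 : D.v (D.tc k) e0 = γ * D.vminus k e0 + (1 - γ) * D.vminus k e1 := by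
      rw [hv', collMat_mulVec_eval γ hi1]
      simp [he0, he1]
    have hv1 : D.v (D.tc k) e1 = (1 + γ) * D.vminus k e0 - γ * D.vminus k e1 := by
      rw [hv', collMat_mulVec_eval γ hi1]
      simp [he0, he1]
    have hvo : ∀ c : Fin n, c ≠ e0 → c ≠ e1 → D.v (D.tc k) c = D.vminus k c := by
      intro c hc0 hc1
      have hc0' : (c : ℕ) ≠ i0 := fun h => hc0 (Fin.ext h)
      have hc1' : (c : ℕ) ≠ i0 + 1 := fun h => hc1 (Fin.ext h)
      rw [hv', collMat_mulVec_eval γ hi1]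
      simp [hc0', hc1']
    rw [Fintype.sum_eq_add e0 e1 hne]
    · have hm0 := D.hm e0
      have hm1 := D.hm e1
      have hd : D.vminus k e1 < D.vminus k e0 := hgt
      have hms : (0:ℝ) < m e0 + m e1 := by linarith
      have h1γ : 0 < 1 + γ := by
        rw [hγ]
        rw [show 1 + (m e0 - m e1) / (m e0 + m e1) = 2 * m e0 / (m e0 + m e1) by
          field_simp; ring]
        positivity
      split_ifs with c0 c1 c1
      · rw [hv0, hv1]
        have hz : m e0 * (γ * D.vminus k e0 + (1 - γ) * D.vminus k e1 - D.vminus k e0)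
            + m e1 * ((1 + γ) * D.vminus k e0 - γ * D.vminus k e1 - D.vminus k e1) = 0 := by
          rw [hγ]; field_simp; ring
        linarith
      · have hc : j ≤ i0 := c0.1
        have hj1 : j ≤ (e1 : ℕ) := by
          show j ≤ i0 + 1
          omega
        exact absurd ⟨hj1, hle⟩ c1
      · rw [hv1, zero_add]
        have : m e1 * ((1 + γ) * D.vminus k e0 - γ * D.vminus k e1 - D.vminus k e1)
            = (m e1 * (1 + γ)) * (D.vminus k e0 - D.vminus k e1) := by ring
        rw [this]
        exact mul_nonneg (mul_nonneg hm1.le h1γ.le) (by linarith)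
      · simp
    · intro c hc
      simp [hvo c hc.1 hc.2]

lemma gfAccum_deriv (D : AccumDatum n m) (j : ℕ) {t : ℝ} (h0 : 0 ≤ t) (ht : t < D.t0)
    (hnc : t ∉ Set.range D.tc) :
    HasDerivWithinAt (gfAccum D j) 0 (Set.Ico 0 D.t0) t := by
  have h : HasDerivWithinAt
      (fun s => ∑ i : Fin n, if j ≤ (i : ℕ) ∧ (i : ℕ) ≤ D.a then m i * (D.v s i + s) else 0)
      (∑ i : Fin n, if j ≤ (i : ℕ) ∧ (i : ℕ) ≤ D.a then m i * (-1 + 1) else 0)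
      (Set.Ico 0 D.t0) t := by
    apply HasDerivWithinAt.fun_sum
    intro i _
    by_cases hP : j ≤ (i : ℕ) ∧ (i : ℕ) ≤ D.a
    · simp only [if_pos hP]
      exact ((D.v_deriv t h0 ht hnc i).add (hasDerivWithinAt_id t _)).const_mul (m i)
    · simp only [if_neg hP]
      exact hasDerivWithinAt_const t _ 0
  have hz : (∑ i : Fin n, if j ≤ (i : ℕ) ∧ (i : ℕ) ≤ D.a then m i * (-1 + 1) else 0) = (0:ℝ) := by
    apply Finset.sum_eq_zero
    intro i _
    split_ifs <;> norm_num
  rw [hz] at h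
  exact h

lemma gfAccum_rc (D : AccumDatum n m) (j : ℕ) {s : ℝ} (h0 : 0 ≤ s) (hs : s < D.t0) :
    Tendsto (gfAccum D j) (nhdsWithin s (Ici s)) (nhds (gfAccum D j s)) := by
  unfold gfAccum
  refine tendsto_finset_sum _ fun i _ => ?_
  by_cases hP : j ≤ (i : ℕ) ∧ (i : ℕ) ≤ D.a
  · simp only [if_pos hP]
    exact ((D.v_rc s h0 hs i).add (tendsto_id.mono_left nhdsWithin_le_nhds)).const_mul (m i)
  · simp only [if_neg hP]
    exact tendsto_const_nhds

lemma gfAccum_ll (D : AccumDatum n m) (j k : ℕ) :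
    Tendsto (gfAccum D j) (nhdsWithin (D.tc k) (Iio (D.tc k))) (nhds (glAccum D j k)) := by
  unfold gfAccum glAccum
  refine tendsto_finset_sum _ fun i _ => ?_
  by_cases hP : j ≤ (i : ℕ) ∧ (i : ℕ) ≤ D.a
  · simp only [if_pos hP]
    exact ((D.v_ll k i).add (tendsto_id.mono_left nhdsWithin_le_nhds)).const_mul (m i)
  · simp only [if_neg hP]
    exact tendsto_const_nhds

lemma gfAccum_flat (D : AccumDatum n m) (j : ℕ) {s t : ℝ} (h0 : 0 ≤ s) (hst : s ≤ t)
    (ht : t < D.t0) (hfree : ∀ u, s < u → u ≤ t → u ∉ Set.range D.tc) :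
    gfAccum D j t = gfAccum D j s := by
  rcases eq_or_lt_of_le hst with rfl | hlt
  · rfl
  have key : ∀ s' ∈ Set.Ioc s t, gfAccum D j t = gfAccum D j s' := by
    intro s' hs'
    have hD : ∀ x ∈ Set.Icc s' t, HasDerivAt (gfAccum D j) 0 x := by
      intro x hx
      have hx0 : 0 < x := lt_of_le_of_lt h0 (lt_of_lt_of_le hs'.1 hx.1)
      have hxt : x < D.t0 := lt_of_le_of_lt hx.2 ht
      have hnc : x ∉ Set.range D.tc := hfree x (lt_of_lt_of_le hs'.1 hx.1) hx.2
      exact (gfAccum_deriv D j hx0.le hxt hnc).hasDerivAt (Ico_mem_nhds hx0 hxt)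
    have := constant_of_has_deriv_right_zero
      (f := gfAccum D j) (a := s') (b := t)
      (fun x hx => (hD x hx).continuousAt.continuousWithinAt)
      (fun x hx => (hD x (Set.Ico_subset_Icc_self hx)).hasDerivWithinAt)
    exact this t (Set.right_mem_Icc.2 hs'.2)
  have h1 : Tendsto (gfAccum D j) (nhdsWithin s (Ioi s)) (nhds (gfAccum D j s)) :=
    (gfAccum_rc D j h0 (lt_of_le_of_lt hst ht)).mono_left (nhdsWithin_mono s Ioi_subset_Ici_self)
  have h2 : Tendsto (gfAccum D j) (nhdsWithin s (Ioi s)) (nhds (gfAccum D j t)) := by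
    refine Tendsto.congr' ?_ tendsto_const_nhds
    filter_upwards [Ioc_mem_nhdsGT_of_mem (Set.left_mem_Ico.2 hlt)] with u hu
    exact key u hu
  exact (tendsto_nhds_unique h1 h2).symm

lemma gfAccum_step (D : AccumDatum n m) (j : ℕ) {s : ℝ} {k : ℕ} (h0 : 0 ≤ s)
    (hsk : s < D.tc k) (hfree : ∀ u, s < u → u < D.tc k → u ∉ Set.range D.tc) :
    gfAccum D j s ≤ gfAccum D j (D.tc k) := by
  have htk : D.tc k < D.t0 := D.tc_lt k
  have h1 : Tendsto (gfAccum D j) (nhdsWithin (D.tc k) (Iio (D.tc k)))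
      (nhds (gfAccum D j s)) := by
    refine Tendsto.congr' ?_ tendsto_const_nhds
    filter_upwards [Ioo_mem_nhdsLT_of_mem (Set.right_mem_Ioc.2 hsk)] with u hu
    exact (gfAccum_flat D j h0 hu.1.le (lt_trans hu.2 htk)
      (fun w hw1 hw2 => hfree w hw1 (lt_of_le_of_lt hw2 hu.2))).symm
  have heq : gfAccum D j s = glAccum D j k := tendsto_nhds_unique h1 (gfAccum_ll D j k)
  rw [heq]
  exact glAccum_le D j k

lemma collAccum_finite (D : AccumDatum n m) {t : ℝ} (ht : t < D.t0) :
    {k | D.tc k ≤ t}.Finite := by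
  have h := D.tc_lim.eventually (eventually_gt_nhds ht)
  rw [eventually_atTop] at h
  obtain ⟨N, hN⟩ := h
  apply Set.Finite.subset (Set.finite_Iio N)
  intro k hk
  simp only [Set.mem_setOf_eq] at hk
  simp only [Set.mem_Iio]
  by_contra hcon
  push_neg at hcon
  exact absurd hk (not_le.2 (hN k hcon))

lemma gfAccum_mono_aux (D : AccumDatum n m) (j : ℕ) :
    ∀ c : ℕ, ∀ s t : ℝ, 0 ≤ s → s ≤ t → t < D.t0 →
      {k | s < D.tc k ∧ D.tc k ≤ t}.ncard ≤ c → gfAccum D j s ≤ gfAccum D j t := by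
  intro c
  induction c with
  | zero =>
    intro s t h0 hst ht hcard
    have hfin : {k | s < D.tc k ∧ D.tc k ≤ t}.Finite :=
      (collAccum_finite D ht).subset (fun k hk => hk.2)
    have hemp : {k | s < D.tc k ∧ D.tc k ≤ t} = ∅ :=
      (Set.ncard_eq_zero hfin).1 (Nat.le_zero.1 hcard)
    refine le_of_eq (gfAccum_flat D j h0 hst ht ?_).symm
    rintro u hu1 hu2 ⟨k', rfl⟩
    exact Set.eq_empty_iff_forall_notMem.1 hemp k' ⟨hu1, hu2⟩
  | succ c ih =>
    intro s t h0 hst ht hcard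
    set F := {k | s < D.tc k ∧ D.tc k ≤ t} with hF
    have hfin : F.Finite := (collAccum_finite D ht).subset (fun k hk => hk.2)
    rcases F.eq_empty_or_nonempty with hemp | hne
    · refine le_of_eq (gfAccum_flat D j h0 hst ht ?_).symm
      rintro u hu1 hu2 ⟨k', rfl⟩
      exact Set.eq_empty_iff_forall_notMem.1 hemp k' ⟨hu1, hu2⟩
    · obtain ⟨K, hKmem, hKmax⟩ := Set.Finite.exists_maximalFor id F hfin hne
      have hKub : ∀ k' ∈ F, k' ≤ K := by
        intro k' hk'
        by_contra hcon
        push_neg at hcon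
        exact absurd (hKmax hk' hcon.le) (not_le.2 hcon)
      have htK : D.tc K ≤ t := hKmem.2
      have h1 : gfAccum D j t = gfAccum D j (D.tc K) := by
        refine gfAccum_flat D j (tcAccum_pos D K).le htK ht ?_
        rintro u hu1 hu2 ⟨k', rfl⟩
        have hk'F : k' ∈ F := ⟨lt_trans hKmem.1 hu1, hu2⟩
        exact absurd (D.tc_mono.monotone (hKub k' hk'F)) (not_le.2 hu1)
      set F' := {k | s < D.tc k ∧ D.tc k < D.tc K} with hF'
      have hsub : F' ⊆ F := fun k hk => ⟨hk.1, le_trans hk.2.le htK⟩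
      have hKnot : K ∉ F' := fun h => lt_irrefl _ h.2
      have hfin' : F'.Finite := hfin.subset hsub
      have h2 : gfAccum D j s ≤ gfAccum D j (D.tc K) := by
        rcases F'.eq_empty_or_nonempty with he | hne'
        · refine gfAccum_step D j h0 hKmem.1 ?_
          rintro u hu1 hu2 ⟨k', rfl⟩
          exact Set.eq_empty_iff_forall_notMem.1 he k' ⟨hu1, hu2⟩
        · obtain ⟨K', hK'mem, hK'max⟩ := Set.Finite.exists_maximalFor id F' hfin' hne'
          have hK'ub : ∀ k' ∈ F', k' ≤ K' := by
            intro k' hk'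
            by_contra hcon
            push_neg at hcon
            exact absurd (hK'max hk' hcon.le) (not_le.2 hcon)
          have hstep : gfAccum D j (D.tc K') ≤ gfAccum D j (D.tc K) := by
            refine gfAccum_step D j (tcAccum_pos D K').le hK'mem.2 ?_
            rintro u hu1 hu2 ⟨k'', rfl⟩
            have hk''F' : k'' ∈ F' := ⟨lt_trans hK'mem.1 hu1, hu2⟩
            exact absurd (D.tc_mono.monotone (hK'ub k'' hk''F')) (not_le.2 hu1)
          have hih : gfAccum D j s ≤ gfAccum D j (D.tc K') := by
            apply ih s (D.tc K') h0 hK'mem.1.le (D.tc_lt K')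
            have hsub2 : {k | s < D.tc k ∧ D.tc k ≤ D.tc K'} ⊆ F' :=
              fun k hk => ⟨hk.1, lt_of_le_of_lt hk.2 hK'mem.2⟩
            have hlt1 : F'.ncard < F.ncard :=
              Set.ncard_lt_ncard (hsub.ssubset_of_ne (fun h => hKnot (h ▸ hKmem))) hfin
            have hle1 : {k | s < D.tc k ∧ D.tc k ≤ D.tc K'}.ncard ≤ F'.ncard :=
              Set.ncard_le_ncard hsub2 hfin'
            omega
          exact le_trans hih hstep
      rw [h1]
      exact h2

lemma gfAccum_mono (D : AccumDatum n m) (j : ℕ) {s t : ℝ} (h0 : 0 ≤ s) (hst : s ≤ t)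
    (ht : t < D.t0) : gfAccum D j s ≤ gfAccum D j t :=
  gfAccum_mono_aux D j _ s t h0 hst ht le_rfl

lemma gfAccum_bdd (D : AccumDatum n m) (j : ℕ) {t : ℝ} (h0 : 0 ≤ t) (ht : t < D.t0) :
    gfAccum D j t ≤ ∑ i : Fin n, m i * (D.C + D.t0) := by
  unfold gfAccum
  refine Finset.sum_le_sum fun i _ => ?_
  have hmi := (D.hm i).le
  have hCt : (0:ℝ) ≤ D.C + D.t0 := (add_pos D.C_pos D.t0_pos).le
  split_ifs
  · have h1 : D.v t i ≤ D.C := le_trans (le_abs_self _) (D.v_bdd t h0 ht i)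
    have h2 : t ≤ D.t0 := ht.le
    exact mul_le_mul_of_nonneg_left (by linarith) hmi
  · exact mul_nonneg hmi hCt

lemma gfAccum_tendsto (D : AccumDatum n m) (j : ℕ) :
    ∃ L, Tendsto (gfAccum D j) (nhdsWithin D.t0 (Iio D.t0)) (nhds L) := by
  set A := gfAccum D j '' Set.Ico 0 D.t0 with hA
  have hne : A.Nonempty := ⟨_, ⟨0, ⟨le_rfl, D.t0_pos⟩, rfl⟩⟩
  have hbdd : BddAbove A := by
    refine ⟨∑ i : Fin n, m i * (D.C + D.t0), ?_⟩
    rintro x ⟨u, hu, rfl⟩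
    exact gfAccum_bdd D j hu.1 hu.2
  refine ⟨sSup A, ?_⟩
  rw [tendsto_order]
  constructor
  · intro b hb
    obtain ⟨x, ⟨u, hu, rfl⟩, hx⟩ := exists_lt_of_lt_csSup hne hb
    filter_upwards [Ioo_mem_nhdsLT_of_mem (Set.right_mem_Ioc.2 hu.2)] with w hw
    exact lt_of_lt_of_le hx (gfAccum_mono D j hu.1 hw.1.le hw.2)
  · intro b hb
    filter_upwards [Ioo_mem_nhdsLT_of_mem (Set.right_mem_Ioc.2 D.t0_pos)] with w hw
    exact lt_of_le_of_lt (le_csSup hbdd ⟨w, ⟨hw.1.le, hw.2⟩, rfl⟩) hb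


end AuxAccum

/-- Lemma A.2: given an accumulating collision datum, for every (0-based)
particle index `i ≤ a` the left limit `lim_{t → t₀⁻} v_i(t)` exists. -/
theorem accum_velocity_left_limit (n : ℕ) (m : Fin n → ℝ) (D : AccumDatum n m) :
    ∀ i : ℕ, ∀ hi : i < n, i ≤ D.a →
      ∃ L : ℝ, Tendsto (fun t => D.v t ⟨i, hi⟩)
        (nhdsWithin D.t0 (Iio D.t0)) (nhds L) := by
  intro i hi hia
  obtain ⟨L1, hL1⟩ := gfAccum_tendsto D i
  obtain ⟨L2, hL2⟩ := gfAccum_tendsto D (i + 1)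
  have hmpos := D.hm ⟨i, hi⟩
  refine ⟨(L1 - L2) / m ⟨i, hi⟩ - D.t0, ?_⟩
  have htt : Tendsto (fun t : ℝ => t) (nhdsWithin D.t0 (Iio D.t0)) (nhds D.t0) :=
    tendsto_id.mono_left nhdsWithin_le_nhds
  have hmain : Tendsto (fun t => (gfAccum D i t - gfAccum D (i + 1) t) / m ⟨i, hi⟩ - t)
      (nhdsWithin D.t0 (Iio D.t0)) (nhds ((L1 - L2) / m ⟨i, hi⟩ - D.t0)) :=
    ((hL1.sub hL2).div_const _).sub htt
  refine hmain.congr fun t => ?_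
  have hident : gfAccum D i t - gfAccum D (i + 1) t = m ⟨i, hi⟩ * (D.v t ⟨i, hi⟩ + t) := by
    unfold gfAccum
    rw [← Finset.sum_sub_distrib]
    rw [Finset.sum_eq_single (⟨i, hi⟩ : Fin n)]
    · have h1 : i ≤ ((⟨i, hi⟩ : Fin n) : ℕ) ∧ ((⟨i, hi⟩ : Fin n) : ℕ) ≤ D.a := ⟨le_rfl, hia⟩
      have h2 : ¬(i + 1 ≤ ((⟨i, hi⟩ : Fin n) : ℕ) ∧ ((⟨i, hi⟩ : Fin n) : ℕ) ≤ D.a) := by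
        rintro ⟨hc, -⟩
        have : i + 1 ≤ i := hc
        omega
      rw [if_pos h1, if_neg h2, sub_zero]
    · intro b _ hbne
      have hb : (b : ℕ) ≠ i := fun h => hbne (Fin.ext h)
      have hiff : (i ≤ (b : ℕ) ∧ (b : ℕ) ≤ D.a) ↔ (i + 1 ≤ (b : ℕ) ∧ (b : ℕ) ≤ D.a) := by
        omega
      rw [if_congr hiff rfl rfl, sub_self]
    · intro h
      exact absurd (Finset.mem_univ _) h
  rw [hident, mul_comm, mul_div_assoc, div_self hmpos.ne', mul_one]
  ring
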